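/- For every i ≥ 1 and every x ∈ ℝ, the Turán-type identity w_i(x)·w_i^{[1]}(x) − w_{i+1}(x)·w_{i−1}^{[1]}(x) = α₀/α_i holds. -/

import Mathlib

theorem stmt4 (N : ℕ) (hN : 1 ≤ N)
    (α β : ℤ → ℝ) (hαpos : ∀ j, 0 < α j)
    (hαper : ∀ j, α (j + N) = α j) (hβper : ∀ j, β (j + N) = β j)
    -- `W k n` is the orthonormal polynomial `w_n^{[k]}` associated with the shifted sequences
    (W : ℕ → ℕ → ℝ → ℝ)
    (hW0 : ∀ (k : ℕ) (x : ℝ), W k 0 x = 1)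
    (hW1 : ∀ (k : ℕ) (x : ℝ), W k 1 x = (x - β k) / α k)
    (hWrec : ∀ k : ℕ, ∀ n : ℕ, 1 ≤ n → ∀ x : ℝ,
      α ((n : ℤ) + k - 1) * W k (n - 1) x + β ((n : ℤ) + k) * W k n x
        + α ((n : ℤ) + k) * W k (n + 1) x = x * W k n x)
    (i : ℕ) (hi : 1 ≤ i) (x : ℝ) :
    W 0 i x * W 1 i x - W 0 (i + 1) x * W 1 (i - 1) x = α 0 / α i := by
  induction i, hi using Nat.le_induction with
  | base =>
    have h := hWrec 0 1 le_rfl x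
    norm_num at h ⊢
    have h0 := (hαpos 0).ne'
    have h1 := (hαpos 1).ne'
    rw [hW0 0 x, hW0 1 x, hW1 0 x, hW1 1 x] at *
    simp only [Nat.cast_zero, Nat.cast_one] at h ⊢
    field_simp at h ⊢
    linear_combination (-1) * h
  | succ i hi IH =>
    have h1 := hWrec 1 i hi x
    have h2 := hWrec 0 (i + 1) (by omega) x
    push_cast at h1 h2
    norm_num at h1 h2
    have hA := (hαpos ((i : ℤ) + 1)).ne'
    have hi' := (hαpos (i : ℤ)).ne'
    have key : α ((i : ℤ) + 1) *
        (W 0 (i + 1) x * W 1 (i + 1) x - W 0 (i + 1 + 1) x * W 1 i x)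
        = α (i : ℤ) *
        (W 0 i x * W 1 i x - W 0 (i + 1) x * W 1 (i - 1) x) := by
      linear_combination W 0 (i + 1) x * h1 - W 1 i x * h2
    rw [IH] at key
    have key2 : α ((i : ℤ) + 1) *
        (W 0 (i + 1) x * W 1 (i + 1) x - W 0 (i + 1 + 1) x * W 1 i x) = α 0 := by
      rw [key]; field_simp
    simp only [Nat.add_sub_cancel]
    push_cast
    rw [eq_div_iff hA]
    linarith [key2]
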